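/- Let X and Y be Banach spaces with X reflexive and continuously embedded into Y, and let K be a non-empty, convex, bounded, closed subset of X. If T : K → K satisfies ‖T(u) − T(v)‖_Y ≤ κ‖u − v‖_Y for all u, v ∈ K with some constant 0 ≤ κ < 1, then T possesses a unique fixed point in K. -/

import Mathlib

open Filter Topology Metric NormedSpace

/-- A convex, bounded, closed set in a reflexive Banach space is weakly compact. -/
lemma aux_weak_compact (X : Type*) [NormedAddCommGroup X] [NormedSpace ℝ X]
    (hrefl : Function.Surjective (NormedSpace.inclusionInDoubleDual ℝ X))
    (K : Set X) (hconv : Convex ℝ K) (hbdd : Bornology.IsBounded K) (hcl : IsClosed K) :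
    IsCompact (toWeakSpace ℝ X '' K) := by
  classical
  set Ψ : WeakSpace ℝ X → WeakDual ℝ (StrongDual ℝ X) :=
    fun x => StrongDual.toWeakDual
      (NormedSpace.inclusionInDoubleDual ℝ X ((toWeakSpace ℝ X).symm x)) with hΨ
  have hinj : Function.Injective (NormedSpace.inclusionInDoubleDual ℝ X) :=
    (NormedSpace.inclusionInDoubleDualLi ℝ (E := X)).injective
  have hΨinj : Function.Injective Ψ := by
    intro a b hab
    exact (toWeakSpace ℝ X).symm.injective (hinj hab)
  have hΨsurj : Function.Surjective Ψ := by
    intro Φ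
    obtain ⟨x, hx⟩ := hrefl (StrongDual.toWeakDual.symm Φ)
    refine ⟨toWeakSpace ℝ X x, ?_⟩
    show StrongDual.toWeakDual
      (NormedSpace.inclusionInDoubleDual ℝ X ((toWeakSpace ℝ X).symm (toWeakSpace ℝ X x))) = Φ
    rw [(toWeakSpace ℝ X).symm_apply_apply, hx]
    exact StrongDual.toWeakDual.apply_symm_apply Φ
  have hΨind : IsInducing Ψ := by
    have h2 : TopologicalSpace.induced Ψ
        (TopologicalSpace.induced (fun (Φ : WeakDual ℝ (StrongDual ℝ X)) (f : StrongDual ℝ X) => Φ f)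
          Pi.topologicalSpace)
        = TopologicalSpace.induced
          ((fun (Φ : WeakDual ℝ (StrongDual ℝ X)) (f : StrongDual ℝ X) => Φ f) ∘ Ψ)
          Pi.topologicalSpace := induced_compose
    exact ⟨h2.symm⟩
  let h : WeakSpace ℝ X ≃ₜ WeakDual ℝ (StrongDual ℝ X) :=
    (Equiv.ofBijective Ψ ⟨hΨinj, hΨsurj⟩).toHomeomorphOfIsInducing hΨind
  have hhΨ : ⇑h = Ψ := rfl
  -- the weak closure of a closed convex set is itself
  have hKwcl : IsClosed (toWeakSpace ℝ X '' K) := by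
    have h1 := hconv.toWeakSpace_closure (𝕜 := ℝ)
    rw [hcl.closure_eq] at h1
    rw [h1]
    exact isClosed_closure
  obtain ⟨r, hr⟩ := hbdd.subset_closedBall 0
  have hball : IsCompact (WeakDual.toStrongDual ⁻¹'
      closedBall (0 : StrongDual ℝ (StrongDual ℝ X)) r) := WeakDual.isCompact_closedBall (𝕜 := ℝ) (E := StrongDual ℝ X) 0 r
  have hsub : ⇑h '' (toWeakSpace ℝ X '' K) ⊆
      WeakDual.toStrongDual ⁻¹' closedBall (0 : StrongDual ℝ (StrongDual ℝ X)) r := by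
    rintro - ⟨-, ⟨x, hxK, rfl⟩, rfl⟩
    have hx : ‖x‖ ≤ r := by simpa [mem_closedBall_zero_iff] using hr hxK
    have : ‖NormedSpace.inclusionInDoubleDual ℝ X x‖ ≤ r :=
      le_trans (NormedSpace.double_dual_bound ℝ X x) hx
    exact (mem_closedBall_zero_iff (E := StrongDual ℝ (StrongDual ℝ X))).mpr this
  have himg : IsCompact (⇑h '' (toWeakSpace ℝ X '' K)) :=
    hball.of_isClosed_subset (h.isClosedMap _ hKwcl) hsub
  exact h.isCompact_image.mp himg

/-- Banach fixed point theorem variant: `X`, `Y` Banach spaces, `X` reflexive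
(the canonical inclusion into the double dual is surjective) and continuously embedded
into `Y` via an injective continuous linear map `e`; `K ⊆ X` non-empty, convex, bounded
and closed; `T : K → K` a contraction with respect to the `Y`-metric. Then `T` has a
unique fixed point in `K`. -/
theorem fixed_point_contraction_in_weaker_norm
    (X Y : Type*) [NormedAddCommGroup X] [NormedSpace ℝ X] [CompleteSpace X]
    [NormedAddCommGroup Y] [NormedSpace ℝ Y] [CompleteSpace Y]
    (hrefl : Function.Surjective (NormedSpace.inclusionInDoubleDual ℝ X))
    (e : X →L[ℝ] Y) (he : Function.Injective e)
    (K : Set X) (hne : K.Nonempty) (hconv : Convex ℝ K)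
    (hbdd : Bornology.IsBounded K) (hcl : IsClosed K)
    (T : X → X) (hmaps : Set.MapsTo T K K)
    (κ : ℝ) (hκ0 : 0 ≤ κ) (hκ1 : κ < 1)
    (hT : ∀ u ∈ K, ∀ v ∈ K, ‖e (T u) - e (T v)‖ ≤ κ * ‖e u - e v‖) :
    ∃! x, x ∈ K ∧ T x = x := by
  classical
  obtain ⟨x₀, hx₀⟩ := hne
  set u : ℕ → X := fun n => T^[n] x₀ with hu_def
  have hu : ∀ n, u n ∈ K := by
    intro n
    induction n with
    | zero => exact hx₀
    | succ n ih =>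
      have : u (n + 1) = T (u n) := Function.iterate_succ_apply' T n x₀
      rw [this]; exact hmaps ih
  have hstep : ∀ n, u (n + 1) = T (u n) := fun n => Function.iterate_succ_apply' T n x₀
  set v : ℕ → Y := fun n => e (u n) with hv_def
  -- geometric estimate
  have hgeom : ∀ n, ‖v (n + 1) - v n‖ ≤ ‖v 1 - v 0‖ * κ ^ n := by
    intro n
    induction n with
    | zero => simp
    | succ n ih =>
      have h1 : ‖v (n + 2) - v (n + 1)‖ ≤ κ * ‖v (n + 1) - v n‖ := by
        have := hT (u (n + 1)) (hu _) (u n) (hu _)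
        simpa [hv_def, hstep] using this
      calc ‖v (n + 2) - v (n + 1)‖ ≤ κ * ‖v (n + 1) - v n‖ := h1
        _ ≤ κ * (‖v 1 - v 0‖ * κ ^ n) := by
            exact mul_le_mul_of_nonneg_left ih hκ0
        _ = ‖v 1 - v 0‖ * κ ^ (n + 1) := by ring
  have hcauchy : CauchySeq v := by
    apply cauchySeq_of_le_geometric κ (‖v 1 - v 0‖) hκ1
    intro n
    rw [dist_eq_norm, norm_sub_rev]
    exact hgeom n
  obtain ⟨y, hy⟩ := cauchySeq_tendsto_of_complete hcauchy
  -- weak compactness: extract a weak cluster point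
  have hKw : IsCompact (toWeakSpace ℝ X '' K) := aux_weak_compact X hrefl K hconv hbdd hcl
  set uw : ℕ → WeakSpace ℝ X := fun n => toWeakSpace ℝ X (u n) with huw
  have hle : Filter.map uw atTop ≤ 𝓟 (toWeakSpace ℝ X '' K) := by
    rw [Filter.le_principal_iff, Filter.mem_map]
    exact Filter.Eventually.of_forall fun n => ⟨u n, hu n, rfl⟩
  obtain ⟨xw, hxwK, hclpt⟩ := hKw.exists_clusterPt hle
  obtain ⟨x, hxK, rfl⟩ := hxwK
  -- show e x = y by testing against all functionals
  have hex : e x = y := by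
    rw [NormedSpace.eq_iff_forall_dual_eq (𝕜 := ℝ)]
    intro g
    set f : StrongDual ℝ X := g.comp e with hf
    have hev : Continuous fun z : WeakSpace ℝ X => f ((toWeakSpace ℝ X).symm z) :=
      WeakBilin.eval_continuous ((topDualPairing ℝ X).flip) f
    have hmap : Tendsto (fun z : WeakSpace ℝ X => f ((toWeakSpace ℝ X).symm z))
        (Filter.map uw atTop) (Filter.map (fun n => f (u n)) atTop) :=
      le_of_eq (by rw [Filter.map_map]; rfl)
    have hcl2 : ClusterPt (f x) (Filter.map (fun n => f (u n)) atTop) :=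
      hclpt.map hev.continuousAt hmap
    have hlim : Tendsto (fun n => f (u n)) atTop (𝓝 (g y)) := by
      have : Tendsto (fun n => g (v n)) atTop (𝓝 (g y)) := (g.continuous.tendsto y).comp hy
      simpa [hf, hv_def] using this
    exact eq_of_nhds_neBot (hcl2.mono hlim)
  -- show T x = x
  have hfix : T x = x := by
    apply he
    have h1 : Tendsto (fun n => v (n + 1)) atTop (𝓝 y) :=
      hy.comp (tendsto_add_atTop_nat 1)
    have h2 : Tendsto (fun n => v (n + 1)) atTop (𝓝 (e (T x))) := by
      rw [tendsto_iff_dist_tendsto_zero]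
      have hb : ∀ n, dist (v (n + 1)) (e (T x)) ≤ κ * dist (v n) (e x) := by
        intro n
        rw [dist_eq_norm, dist_eq_norm]
        have := hT (u n) (hu n) x hxK
        simpa [hv_def, hstep] using this
      have hz : Tendsto (fun n => κ * dist (v n) (e x)) atTop (𝓝 0) := by
        have : Tendsto (fun n => dist (v n) (e x)) atTop (𝓝 0) := by
          rw [hex]
          exact tendsto_iff_dist_tendsto_zero.mp hy
        simpa using this.const_mul κ
      exact squeeze_zero (fun n => dist_nonneg) hb hz
    have := tendsto_nhds_unique h2 h1
    rw [this, hex]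
  refine ⟨x, ⟨hxK, hfix⟩, ?_⟩
  rintro z ⟨hzK, hz⟩
  apply he
  have h1 : ‖e z - e x‖ ≤ κ * ‖e z - e x‖ := by
    have := hT z hzK x hxK
    rwa [hz, hfix] at this
  have h2 : ‖e z - e x‖ = 0 := by nlinarith [norm_nonneg (e z - e x)]
  have : e z - e x = 0 := by simpa using h2
  have := sub_eq_zero.mp this
  exact this
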